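/- For the random-offset scheme with d fixed, the limit as w → ∞ of P_{w,q} is 1 for every d > 0; whereas for the no-offset scheme with independent inputs (ρ = 0), the limit as w → ∞ of P_w(0) = 2∑_{i=0}^∞(Φ((i+1)w) - Φ(iw))² is 1/2. In particular, lim_{w→∞} P_w(0) < lim_{w→∞} P_{w,q} for any d > 0. -/

import Mathlib

open MeasureTheory ProbabilityTheory Real Set

/-- Standard normal density. -/
noncomputable def stdPdf (x : ℝ) : ℝ := (Real.sqrt (2 * Real.pi))⁻¹ * Real.exp (-x ^ 2 / 2)

/-- Standard normal CDF. -/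
noncomputable def Phi (x : ℝ) : ℝ := ∫ t in Set.Iic x, stdPdf t

open Filter

lemma stdPdf_eq (x : ℝ) : stdPdf x = (Real.sqrt (2 * Real.pi))⁻¹ * Real.exp (-(1/2) * x ^ 2) := by
  unfold stdPdf; ring_nf

lemma stdPdf_nonneg (x : ℝ) : 0 ≤ stdPdf x := by
  unfold stdPdf
  positivity

lemma integrable_stdPdf : Integrable stdPdf := by
  have h := (integrable_exp_neg_mul_sq (by norm_num : (0:ℝ) < 1/2)).const_mul
    (Real.sqrt (2 * Real.pi))⁻¹
  exact h.congr (by filter_upwards with x using (stdPdf_eq x).symm)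

lemma integral_stdPdf : ∫ x, stdPdf x = 1 := by
  simp_rw [stdPdf_eq]
  rw [MeasureTheory.integral_const_mul, integral_gaussian]
  have h1 : Real.pi / (1/2) = 2 * Real.pi := by ring
  rw [h1, inv_mul_cancel₀]
  positivity

lemma Phi_mono : Monotone Phi := fun a b hab =>
  setIntegral_mono_set integrable_stdPdf.integrableOn
    (Filter.Eventually.of_forall stdPdf_nonneg) (HasSubset.Subset.eventuallyLE (Iic_subset_Iic.2 hab))

lemma Phi_nonneg (x : ℝ) : 0 ≤ Phi x :=
  setIntegral_nonneg measurableSet_Iic (fun t _ => stdPdf_nonneg t)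

lemma Phi_le_one (x : ℝ) : Phi x ≤ 1 := by
  rw [← integral_stdPdf]
  exact setIntegral_le_integral integrable_stdPdf (Filter.Eventually.of_forall stdPdf_nonneg)

lemma Phi_zero : Phi 0 = 1/2 := by
  have heven : ∀ x : ℝ, stdPdf (-x) = stdPdf x := by
    intro x; unfold stdPdf; rw [neg_pow]; ring_nf
  have h1 : Phi 0 = ∫ x in Set.Ioi (0:ℝ), stdPdf x := by
    calc Phi 0 = ∫ x in Set.Iic (0:ℝ), stdPdf (-x) :=
          setIntegral_congr_fun measurableSet_Iic (fun x _ => (heven x).symm)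
      _ = ∫ x in Set.Ioi (-(0:ℝ)), stdPdf x := integral_comp_neg_Iic 0 stdPdf
      _ = ∫ x in Set.Ioi (0:ℝ), stdPdf x := by rw [neg_zero]
  have h2 : Phi 0 + ∫ x in Set.Ioi (0:ℝ), stdPdf x = 1 :=
    (intervalIntegral.integral_Iic_add_Ioi (μ := volume) (b := (0:ℝ)) (f := stdPdf)
      integrable_stdPdf.integrableOn integrable_stdPdf.integrableOn).trans integral_stdPdf
  rw [← h1] at h2
  linarith

lemma Phi_tendsto : Tendsto Phi atTop (nhds 1) := by
  have hIoi : Tendsto (fun w : ℝ => ∫ t in (0:ℝ)..w, stdPdf t) atTop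
      (nhds (∫ t in Set.Ioi (0:ℝ), stdPdf t)) :=
    intervalIntegral_tendsto_integral_Ioi 0 integrable_stdPdf.integrableOn tendsto_id
  have key : Tendsto (fun w : ℝ => Phi 0 + ∫ t in (0:ℝ)..w, stdPdf t) atTop (nhds 1) := by
    have h2 : Phi 0 + ∫ x in Set.Ioi (0:ℝ), stdPdf x = 1 :=
      (intervalIntegral.integral_Iic_add_Ioi (μ := volume) (b := (0:ℝ)) (f := stdPdf)
        integrable_stdPdf.integrableOn integrable_stdPdf.integrableOn).trans integral_stdPdf
    have := (tendsto_const_nhds (x := Phi 0) (f := atTop (α := ℝ))).add hIoi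
    rwa [h2] at this
  refine key.congr' ?_
  filter_upwards [eventually_ge_atTop (0:ℝ)] with w hw
  rw [intervalIntegral.integral_of_le hw]
  unfold Phi
  rw [← setIntegral_union (Set.Iic_disjoint_Ioc le_rfl) measurableSet_Ioc
    integrable_stdPdf.integrableOn integrable_stdPdf.integrableOn,
    Set.Iic_union_Ioc_eq_Iic hw]

lemma part1 (d : ℝ) (hd : 0 < d) :
    Tendsto
      (fun w : ℝ => ∫ t in Set.Ioc (0 : ℝ) w,
        (2 / Real.sqrt d) * stdPdf (t / Real.sqrt d) * (1 - t / w))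
      atTop (nhds 1) := by
  set s := Real.sqrt d with hsdef
  have hs : 0 < s := Real.sqrt_pos.2 hd
  have hs2 : s ^ 2 = d := Real.sq_sqrt hd.le
  set b : ℝ := 1 / (2 * d) with hbdef
  have hb : 0 < b := by positivity
  set C : ℝ := (2 / s) * (Real.sqrt (2 * Real.pi))⁻¹ with hCdef
  set g : ℝ → ℝ := fun t => (2 / s) * stdPdf (t / s) with hgdef
  have hsqrt2pi : (0:ℝ) < Real.sqrt (2 * Real.pi) := Real.sqrt_pos.2 (by positivity)
  have hg : ∀ t : ℝ, g t = C * Real.exp (-b * t ^ 2) := by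
    intro t
    simp only [hgdef, hCdef, stdPdf, mul_assoc]
    congr 2
    rw [div_pow, hs2, hbdef]
    field_simp [hd.ne']
    try ring
    try tauto
  have hg_nonneg : ∀ t : ℝ, 0 ≤ g t := by
    intro t; rw [hg]; positivity
  have hInt_g : Integrable g := by
    refine ((integrable_exp_neg_mul_sq hb).const_mul C).congr ?_
    filter_upwards with t using (hg t).symm
  have hInt_tg : Integrable (fun t => t * g t) := by
    refine (((integrable_mul_exp_neg_mul_sq hb).const_mul C)).congr ?_
    filter_upwards with t
    rw [hg t]; ring
  have hIoi : ∫ t in Set.Ioi (0:ℝ), g t = 1 := by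
    have h1 : ∫ t in Set.Ioi (0:ℝ), g t = C * ∫ t in Set.Ioi (0:ℝ), Real.exp (-b * t ^ 2) := by
      rw [← MeasureTheory.integral_const_mul]
      exact setIntegral_congr_fun measurableSet_Ioi (fun t _ => hg t)
    rw [h1, integral_gaussian_Ioi]
    have hpib : Real.pi / b = (2 * Real.pi) * d := by
      rw [hbdef]; field_simp [hd.ne']
    rw [hpib, Real.sqrt_mul (by positivity) d, ← hsdef, hCdef]
    field_simp
  have hA : Tendsto (fun w : ℝ => ∫ t in Set.Ioc (0:ℝ) w, g t) atTop (nhds 1) := by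
    have h := intervalIntegral_tendsto_integral_Ioi 0 hInt_g.integrableOn (tendsto_id (α := ℝ))
    rw [hIoi] at h
    refine h.congr' ?_
    filter_upwards [eventually_ge_atTop (0:ℝ)] with w hw
    simp only [id_eq]
    rw [intervalIntegral.integral_of_le hw]
  set M : ℝ := ∫ t in Set.Ioi (0:ℝ), t * g t with hMdef
  have hB_le : ∀ w : ℝ, ∫ t in Set.Ioc (0:ℝ) w, t * g t ≤ M := by
    intro w
    apply setIntegral_mono_set hInt_tg.integrableOn
    · filter_upwards [ae_restrict_mem measurableSet_Ioi] with t ht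
      exact mul_nonneg ht.le (hg_nonneg t)
    · exact HasSubset.Subset.eventuallyLE Set.Ioc_subset_Ioi_self
  have hB_nonneg : ∀ w : ℝ, 0 ≤ ∫ t in Set.Ioc (0:ℝ) w, t * g t :=
    fun w => setIntegral_nonneg measurableSet_Ioc (fun t ht => mul_nonneg ht.1.le (hg_nonneg t))
  have hB0 : Tendsto (fun w : ℝ => w⁻¹ * ∫ t in Set.Ioc (0:ℝ) w, t * g t) atTop (nhds 0) := by
    apply squeeze_zero'
    · filter_upwards [eventually_ge_atTop (0:ℝ)] with w hw
      exact mul_nonneg (inv_nonneg.2 hw) (hB_nonneg w)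
    · filter_upwards [eventually_ge_atTop (0:ℝ)] with w hw
      exact mul_le_mul_of_nonneg_left (hB_le w) (inv_nonneg.2 hw)
    · have := tendsto_inv_atTop_zero (𝕜 := ℝ) |>.mul_const M
      simpa using this
  have hfinal := hA.sub hB0
  rw [sub_zero] at hfinal
  refine hfinal.congr' ?_
  filter_upwards [eventually_gt_atTop (0:ℝ)] with w hw
  have hsplit : ∀ t : ℝ, g t * (1 - t / w) = g t - w⁻¹ * (t * g t) := by
    intro t
    rw [div_eq_mul_inv]
    ring
  calc (∫ t in Set.Ioc (0:ℝ) w, g t) - w⁻¹ * ∫ t in Set.Ioc (0:ℝ) w, t * g t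
      = (∫ t in Set.Ioc (0:ℝ) w, g t) - ∫ t in Set.Ioc (0:ℝ) w, w⁻¹ * (t * g t) := by
        congr 1
        exact (MeasureTheory.integral_const_mul w⁻¹ _).symm
    _ = ∫ t in Set.Ioc (0:ℝ) w, (g t - w⁻¹ * (t * g t)) := by
        rw [integral_sub hInt_g.integrableOn (hInt_tg.integrableOn.const_mul w⁻¹)]
    _ = ∫ t in Set.Ioc (0:ℝ) w, (2 / s) * stdPdf (t / s) * (1 - t / w) := by
        refine setIntegral_congr_fun measurableSet_Ioc (fun t _ => ?_)
        rw [← hsplit t]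

lemma part2 : Tendsto
      (fun w : ℝ => 2 * ∑' i : ℕ, (Phi (((i : ℝ) + 1) * w) - Phi ((i : ℝ) * w)) ^ 2)
      atTop (nhds (1 / 2)) := by
  set a : ℝ → ℕ → ℝ := fun w i => Phi (((i : ℝ) + 1) * w) - Phi ((i : ℝ) * w) with ha
  have ha_nonneg : ∀ w : ℝ, 0 ≤ w → ∀ i : ℕ, 0 ≤ a w i := by
    intro w hw i
    apply sub_nonneg.2
    apply Phi_mono
    nlinarith [Nat.cast_nonneg (α := ℝ) i]
  have ha_le_one : ∀ w : ℝ, 0 ≤ w → ∀ i : ℕ, a w i ≤ 1 := fun w hw i => by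
    have := Phi_nonneg ((i : ℝ) * w); have := Phi_le_one (((i:ℝ)+1) * w); simp only [ha]; linarith
  have hsum_range : ∀ w : ℝ, ∀ n : ℕ, ∑ i ∈ Finset.range n, a w i = Phi (n * w) - Phi 0 := by
    intro w n
    have := Finset.sum_range_sub (f := fun i : ℕ => Phi ((i : ℝ) * w)) n
    simp only [ha]
    simpa using this
  have hsummable : ∀ w : ℝ, 0 ≤ w → Summable (fun i => (a w i) ^ 2) := by
    intro w hw
    apply summable_of_sum_range_le (c := 1) (fun i => sq_nonneg _)
    intro n
    calc ∑ i ∈ Finset.range n, (a w i) ^ 2 ≤ ∑ i ∈ Finset.range n, a w i := by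
          apply Finset.sum_le_sum
          intro i _
          nlinarith [ha_nonneg w hw i, ha_le_one w hw i]
      _ = Phi (n * w) - Phi 0 := hsum_range w n
      _ ≤ 1 := by have := Phi_le_one ((n:ℝ)*w); have := Phi_nonneg (0:ℝ); linarith
  -- lower bound
  have hlow : ∀ w : ℝ, 0 ≤ w → 2 * (Phi w - Phi 0)^2 ≤ 2 * ∑' i : ℕ, (a w i)^2 := by
    intro w hw
    have h0 : (a w 0)^2 ≤ ∑' i : ℕ, (a w i)^2 :=
      Summable.le_tsum (hsummable w hw) 0 (fun j _ => sq_nonneg _)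
    have h00 : a w 0 = Phi w - Phi 0 := by simp [ha]
    rw [← h00]
    linarith
  -- upper bound
  have hup : ∀ w : ℝ, 0 ≤ w → 2 * ∑' i : ℕ, (a w i)^2
      ≤ 2 * (Phi w - Phi 0)^2 + 2 * (1 - Phi w) := by
    intro w hw
    have hs := hsummable w hw
    have hshift : Summable (fun i : ℕ => (a w (i+1))^2) := (summable_nat_add_iff 1).2 hs
    have hsplit : ∑' i : ℕ, (a w i)^2 = (a w 0)^2 + ∑' i : ℕ, (a w (i+1))^2 :=
      Summable.tsum_eq_zero_add hs
    have hshift1 : Summable (fun i : ℕ => a w (i+1)) := by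
      apply summable_of_sum_range_le (c := 1) (fun i => ha_nonneg w hw _)
      intro n
      have := Finset.sum_range_sub (f := fun i : ℕ => Phi (((i+1) : ℕ) * w)) n
      calc ∑ i ∈ Finset.range n, a w (i+1)
          = ∑ i ∈ Finset.range n, (Phi (((i+1+1):ℕ) * w) - Phi (((i+1):ℕ) * w)) := by
            apply Finset.sum_congr rfl; intro i _; simp only [ha]; push_cast; ring_nf
        _ = Phi (((n+1):ℕ) * w) - Phi (((0+1):ℕ) * w) := this
        _ ≤ 1 := by
            have := Phi_le_one ((((n+1):ℕ):ℝ)*w); have := Phi_nonneg ((((0+1):ℕ):ℝ)*w); linarith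
    have htail : ∑' i : ℕ, (a w (i+1))^2 ≤ (1 - Phi w) := by
      calc ∑' i : ℕ, (a w (i+1))^2 ≤ ∑' i : ℕ, (1 - Phi w) * a w (i+1) := by
            apply Summable.tsum_le_tsum _ hshift (hshift1.mul_left _)
            intro i
            have h1 : a w (i+1) ≤ 1 - Phi w := by
              have hm : Phi w ≤ Phi (((i:ℝ)+1) * w) := by
                apply Phi_mono; nlinarith [Nat.cast_nonneg (α := ℝ) i]
              have h2 := Phi_le_one (((i:ℝ)+1+1) * w)
              simp only [ha]; push_cast; linarith
            nlinarith [ha_nonneg w hw (i+1)]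
        _ = (1 - Phi w) * ∑' i : ℕ, a w (i+1) := tsum_mul_left
        _ ≤ (1 - Phi w) * 1 := by
            apply mul_le_mul_of_nonneg_left _ (by linarith [Phi_le_one w])
            apply Real.tsum_le_of_sum_range_le (fun i => ha_nonneg w hw _)
            intro n
            have := Finset.sum_range_sub (f := fun i : ℕ => Phi (((i+1) : ℕ) * w)) n
            calc ∑ i ∈ Finset.range n, a w (i+1)
                = ∑ i ∈ Finset.range n, (Phi (((i+1+1):ℕ) * w) - Phi (((i+1):ℕ) * w)) := by
                  apply Finset.sum_congr rfl; intro i _; simp only [ha]; push_cast; ring_nf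
              _ = Phi (((n+1):ℕ) * w) - Phi (((0+1):ℕ) * w) := this
              _ ≤ 1 := by
                  have := Phi_le_one ((((n+1):ℕ):ℝ)*w)
                  have := Phi_nonneg ((((0+1):ℕ):ℝ)*w); linarith
        _ = 1 - Phi w := mul_one _
    have h00 : a w 0 = Phi w - Phi 0 := by simp [ha]
    rw [hsplit, h00]
    linarith
  -- squeeze
  have hL : Tendsto (fun w : ℝ => 2 * (Phi w - Phi 0)^2) atTop (nhds (1/2)) := by
    have h := ((Phi_tendsto.sub_const (Phi 0)).pow 2).const_mul 2
    have hval : (2:ℝ) * ((1:ℝ) - Phi 0)^2 = 1/2 := by rw [Phi_zero]; norm_num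
    rwa [hval] at h
  have hU : Tendsto (fun w : ℝ => 2 * (Phi w - Phi 0)^2 + 2 * (1 - Phi w)) atTop (nhds (1/2)) := by
    have h2 : Tendsto (fun w : ℝ => 2 * (1 - Phi w)) atTop (nhds (2 * ((1:ℝ) - 1))) :=
      ((tendsto_const_nhds.sub Phi_tendsto)).const_mul 2
    convert hL.add h2 using 2
    norm_num
  exact tendsto_of_tendsto_of_tendsto_of_le_of_le' hL hU
    (by filter_upwards [eventually_ge_atTop (0:ℝ)] with w hw using hlow w hw)
    (by filter_upwards [eventually_ge_atTop (0:ℝ)] with w hw using hup w hw)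


/-- As w → ∞, the random-offset collision probability tends to 1 for every d > 0,
while the no-offset collision probability at ρ = 0 tends to 1/2 < 1. -/
theorem stmt14 :
    (∀ d : ℝ, 0 < d →
      Filter.Tendsto
        (fun w : ℝ => ∫ t in Set.Ioc (0 : ℝ) w,
          (2 / Real.sqrt d) * stdPdf (t / Real.sqrt d) * (1 - t / w))
        Filter.atTop (nhds 1)) ∧
    Filter.Tendsto
      (fun w : ℝ => 2 * ∑' i : ℕ, (Phi (((i : ℝ) + 1) * w) - Phi ((i : ℝ) * w)) ^ 2)
      Filter.atTop (nhds (1 / 2)) ∧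
    (1 / 2 : ℝ) < 1 := by
  exact ⟨fun d hd => part1 d hd, part2, by norm_num⟩
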